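/- For relations β and Eℛ on a common type with ∼ = E* an equivalence commuting with β (∼∘β ⊆ β∘∼), if R' = β ∪ R is ∼-confluent on ∼-classes, then ▷ = β ∪ (∼∘R) is ∼-confluent on ∼-classes. (Uses: ▷* ⊆ (∼∘R')* and (∼∘R')* ⊆ ▷*∘∼, plus the lemma that ∼-confluence on ∼-classes of a relation X implies ∼-confluence on ∼-classes of ∼∘X.) -/

import Mathlib

def Comp {T : Type*} (r s : T → T → Prop) : T → T → Prop :=
  fun a b => ∃ c, r a c ∧ s c b

/-- `∼`-confluence on `∼`-classes of a relation `X`. -/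
def SimConflOnClasses {T : Type*} (sim X : T → T → Prop) : Prop :=
  ∀ u t u' v : T, Relation.ReflTransGen X u t → sim u u' → Relation.ReflTransGen X u' v →
    ∃ w w', Relation.ReflTransGen X t w ∧ sim w w' ∧ Relation.ReflTransGen X v w'

section Aux

variable {T : Type*} {sim X : T → T → Prop}

private lemma hXsY (h : Relation.ReflTransGen X a b) (hrefl : ∀ a : T, sim a a) :
    Relation.ReflTransGen (Comp sim X) a b :=
  Relation.ReflTransGen.mono (fun a b hab => ⟨a, hrefl a, hab⟩) _ _ h

/-- absorb a leading `sim` into a `Comp sim X` chain (or it stays a `sim`). -/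
private lemma habs (h : sim a b) (hc : Relation.ReflTransGen (Comp sim X) b c)
    (htrans : ∀ {a b c : T}, sim a b → sim b c → sim a c) :
    Relation.ReflTransGen (Comp sim X) a c ∨ sim a c := by
  rcases hc.cases_head with rfl | ⟨d, ⟨m, hbm, hmd⟩, hdc⟩
  · exact Or.inr h
  · exact Or.inl (Relation.ReflTransGen.head ⟨m, htrans h hbm, hmd⟩ hdc)

/-- Key lemma: a `Comp sim X` chain versus a pure `X*` chain from the same point. -/
private lemma L1 (hrefl : ∀ a : T, sim a a)
    (htrans : ∀ {a b c : T}, sim a b → sim b c → sim a c)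
    (hconf : SimConflOnClasses sim X)
    (hmp : Relation.ReflTransGen (Comp sim X) m p) :
    ∀ t, Relation.ReflTransGen X m t →
      ∃ a b, Relation.ReflTransGen (Comp sim X) t a ∧ sim a b ∧ Relation.ReflTransGen X p b := by
  induction hmp with
  | refl => exact fun t hmt => ⟨t, t, Relation.ReflTransGen.refl, hrefl t, hmt⟩
  | tail hmc hstep ih =>
    intro t hmt
    obtain ⟨a, b, hta, hab, hcb⟩ := ih t hmt
    obtain ⟨n, hcn, hnp⟩ := hstep
    obtain ⟨w, w', hbw, hww, hpw⟩ :=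
      hconf _ b n _ hcb hcn (Relation.ReflTransGen.single hnp)
    rcases hbw.cases_head with rfl | ⟨d, hbd, hdw⟩
    · exact ⟨a, w', hta, htrans hab hww, hpw⟩
    · exact ⟨w, w', hta.trans (Relation.ReflTransGen.head ⟨b, hab, hbd⟩ (hXsY hdw hrefl)),
        hww, hpw⟩

/-- Transport: reduction from `u` and a `sim` from `u` join modulo `sim`. -/
private lemma L2 (hrefl : ∀ a : T, sim a a)
    (htrans : ∀ {a b c : T}, sim a b → sim b c → sim a c)
    (hsymm : ∀ {a b : T}, sim a b → sim b a)
    (hconf : SimConflOnClasses sim X)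
    (hut : Relation.ReflTransGen (Comp sim X) u t) :
    ∀ u', sim u u' →
      ∃ w w', Relation.ReflTransGen (Comp sim X) t w ∧ sim w w' ∧
        Relation.ReflTransGen (Comp sim X) u' w' := by
  induction hut with
  | refl => exact fun u' h => ⟨u, u', Relation.ReflTransGen.refl, h, Relation.ReflTransGen.refl⟩
  | tail hub hbt ih =>
    intro u' huu'
    obtain ⟨p, p', hbp, hpp, hup⟩ := ih u' huu'
    obtain ⟨m, hbm, hmt⟩ := hbt
    rcases habs (hsymm hbm) hbp htrans with hmp | hmp
    · obtain ⟨a, c, hta, hac, hpc⟩ := L1 hrefl (fun h1 h2 => htrans h1 h2) hconf hmp _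
        (Relation.ReflTransGen.single hmt)
      rcases habs (hsymm hpp) (hXsY hpc hrefl) htrans with hpc' | hpc'
      · exact ⟨a, c, hta, hac, hup.trans hpc'⟩
      · exact ⟨a, p', hta, htrans hac (hsymm hpc'), hup⟩
    · refine ⟨_, _, Relation.ReflTransGen.refl, hrefl _,
        hup.tail ⟨m, htrans (hsymm hpp) (hsymm hmp), hmt⟩⟩

/-- `∼`-confluence on classes of `X` implies that of `∼∘X`. -/
private lemma keylemma (hrefl : ∀ a : T, sim a a)
    (htrans : ∀ {a b c : T}, sim a b → sim b c → sim a c)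
    (hsymm : ∀ {a b : T}, sim a b → sim b a)
    (hconf : SimConflOnClasses sim X) :
    SimConflOnClasses sim (Comp sim X) := by
  intro u t u' v hut huu' hu'v
  induction hu'v with
  | refl => exact L2 hrefl (fun h1 h2 => htrans h1 h2) (fun h => hsymm h) hconf hut u' huu'
  | tail hu'c hcv ih =>
    obtain ⟨p, p', htp, hpp, hcp⟩ := ih
    obtain ⟨n, hcn, hnv⟩ := hcv
    rcases habs (hsymm hcn) hcp htrans with hnp | hnp
    · obtain ⟨a, b, hva, hab, hpb⟩ := L1 hrefl (fun h1 h2 => htrans h1 h2) hconf hnp _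
        (Relation.ReflTransGen.single hnv)
      rcases habs hpp (hXsY hpb hrefl) htrans with hpb' | hpb'
      · exact ⟨b, a, htp.trans hpb', hsymm hab, hva⟩
      · exact ⟨p, a, htp, htrans hpb' (hsymm hab), hva⟩
    · exact ⟨_, _, htp.tail ⟨n, htrans hpp (hsymm hnp), hnv⟩, hrefl _, Relation.ReflTransGen.refl⟩

end Aux

/-- With `E` symmetric, `∼ = E*` commuting with `β`: if `R' = β ∪ R` is
`∼`-confluent on `∼`-classes, then `▷ = β ∪ (∼∘R)` is `∼`-confluent on `∼`-classes. -/
theorem stmt15 {T : Type*} (β R E : T → T → Prop)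
    (hsym : ∀ a b : T, E a b → E b a)
    (sim : T → T → Prop) (hsim : sim = Relation.ReflTransGen E)
    (hcomm : ∀ t u v : T, sim t u → β u v → ∃ w, β t w ∧ sim w v)
    (hconf : SimConflOnClasses sim (fun a b => β a b ∨ R a b)) :
    SimConflOnClasses sim (fun a b => β a b ∨ Comp sim R a b) := by
  have hrefl : ∀ a : T, sim a a := by subst hsim; exact fun a => Relation.ReflTransGen.refl
  have htrans : ∀ {a b c : T}, sim a b → sim b c → sim a c := by
    subst hsim; exact fun h1 h2 => h1.trans h2
  have hsymm : ∀ {a b : T}, sim a b → sim b a := by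
    subst hsim
    exact fun h => by
      induction h with
      | refl => exact Relation.ReflTransGen.refl
      | tail _ hbc ih => exact Relation.ReflTransGen.head (hsym _ _ hbc) ih
  have hconfY : SimConflOnClasses sim (Comp sim (fun a b => β a b ∨ R a b)) :=
    keylemma hrefl (fun h1 h2 => htrans h1 h2) (fun h => hsymm h) hconf
  set D : T → T → Prop := fun a b => β a b ∨ Comp sim R a b with hD
  have hDY : ∀ a b : T, D a b → Comp sim (fun a b => β a b ∨ R a b) a b := by
    rintro a b (hβ | ⟨m, hs, hR⟩)
    · exact ⟨a, hrefl a, Or.inl hβ⟩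
    · exact ⟨m, hs, Or.inr hR⟩
  have L4 : ∀ a b : T, Relation.ReflTransGen (Comp sim (fun a b => β a b ∨ R a b)) a b →
      ∃ c, Relation.ReflTransGen D a c ∧ sim c b := by
    intro a b h
    induction h with
    | refl => exact ⟨a, Relation.ReflTransGen.refl, hrefl a⟩
    | tail hab hbn ih =>
      obtain ⟨c, hac, hcb⟩ := ih
      obtain ⟨m, hbm, hmn⟩ := hbn
      have hcm : sim c m := htrans hcb hbm
      rcases hmn with hβ | hR
      · obtain ⟨w, hβ', hwn⟩ := hcomm c m _ hcm hβ
        exact ⟨w, hac.tail (Or.inl hβ'), hwn⟩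
      · exact ⟨_, hac.tail (Or.inr ⟨m, hcm, hR⟩), hrefl _⟩
  intro u t u' v hut huu' hu'v
  obtain ⟨w, w', h1, h2, h3⟩ := hconfY u t u' v (Relation.ReflTransGen.mono hDY _ _ hut) huu' (Relation.ReflTransGen.mono hDY _ _ hu'v)
  obtain ⟨c, htc, hcw⟩ := L4 _ _ h1
  obtain ⟨c', hvc, hc'w'⟩ := L4 _ _ h3
  exact ⟨c, c', htc, htrans hcw (htrans h2 (hsymm hc'w')), hvc⟩
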